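/- Fix ℓ ∈ ℕ₀ and d = (d_1,…,d_ℓ), r = (r_1,…,r_ℓ) ∈ ℕ^ℓ. Every virtual polytope V ∈ Q̂_ℓ satisfies dim(V) ≤ Σ_{k=1}^ℓ (r_k − 1)·∏_{i=k+1}^ℓ d_i. -/

import Mathlib

open Pointwise

noncomputable section SparseMaxout

/-- Vectors in `ℝ^n`. -/
abbrev Vec (n : ℕ) := Fin n → ℝ

/-- A polytope is the convex hull of a finite nonempty set of points. -/
def IsPolytope {n : ℕ} (P : Set (Vec n)) : Prop :=
  ∃ s : Finset (Vec n), s.Nonempty ∧ P = convexHull ℝ (s : Set (Vec n))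

/-- A simplex is the convex hull of a finite nonempty affinely independent set of points. -/
def IsSimplex {n : ℕ} (S : Set (Vec n)) : Prop :=
  ∃ (k : ℕ) (pts : Fin k → Vec n), 0 < k ∧ AffineIndependent ℝ pts ∧
    S = convexHull ℝ (Set.range pts)

/-- The support function `f_P(x) = max_{a ∈ P} ⟨a, x⟩` of a set `P`. -/
def suppFn {n : ℕ} (P : Set (Vec n)) (x : Vec n) : ℝ :=
  sSup ((fun a => ∑ i, a i * x i) '' P)

/-- The dimension of a polytope: the dimension of its affine hull. -/
def polyDim {n : ℕ} (P : Set (Vec n)) : ℕ :=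
  Module.finrank ℝ (affineSpan ℝ P).direction

/-- A (representative of a) virtual polytope: a pair `(P, Q)` standing for `P - Q`. -/
abbrev VP (n : ℕ) := Set (Vec n) × Set (Vec n)

/-- Two pairs represent the same virtual polytope: `P₁ - Q₁ = P₂ - Q₂` iff
`P₁ + Q₂ = P₂ + Q₁` (Minkowski sums). -/
def vEquiv {n : ℕ} (A B : VP n) : Prop :=
  A.1 + B.2 = B.1 + A.2

/-- Both components are polytopes. -/
def IsPolyPair {n : ℕ} (A : VP n) : Prop :=
  IsPolytope A.1 ∧ IsPolytope A.2

/-- Scalar multiple of a virtual polytope: `λ(P - Q) := λP - λQ`. -/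
def vSMul {n : ℕ} (c : ℝ) (A : VP n) : VP n := (c • A.1, c • A.2)

/-- Convex hull of finitely many virtual polytopes:
`conv(P₁-Q₁, …, P_m-Q_m) := conv(⋃ᵢ (Pᵢ + Σ_{k≠i} Q_k)) - Σ_k Q_k`. -/
def vConv {n m : ℕ} (V : Fin m → VP n) : VP n :=
  (convexHull ℝ (⋃ i, ((V i).1 + ∑ k ∈ Finset.univ.erase i, (V k).2)),
   ∑ k, (V k).2)

/-- The dimension of a virtual polytope: `min{dim(A + B) : V = A - B}` over
polytope representations. -/
def vDim {n : ℕ} (V : VP n) : ℕ :=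
  sInf {m | ∃ A B : Set (Vec n), IsPolytope A ∧ IsPolytope B ∧
    vEquiv (A, B) V ∧ polyDim (A + B) = m}

/-- Support function of a virtual polytope: `f_{P-Q} := f_P - f_Q`. -/
def vSuppFn {n : ℕ} (V : VP n) (x : Vec n) : ℝ :=
  suppFn V.1 x - suppFn V.2 x

/-- The recursively defined classes `Q̂_ℓ` of virtual polytopes dual to sparse maxout
networks with indegree constraints `d` and ranks `r` (layer `k` uses `d k`, `r k`);
membership is up to equality of virtual polytopes. -/
def Qhat (n : ℕ) (d r : ℕ → ℕ) : ℕ → Set (VP n)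
  | 0 => {V | IsPolyPair V ∧ ∃ v : Vec n, vEquiv V ({v}, {0})}
  | (k+1) => {V | IsPolyPair V ∧
      ∃ (α : Fin (r (k+1)) → Fin (d (k+1)) → ℝ) (W : Fin (d (k+1)) → VP n),
        (∀ j, W j ∈ Qhat n d r k) ∧
        vEquiv V (vConv (fun i => ∑ j, vSMul (α i j) (W j)))}

/-- `Q_n(ℓ,d,r)`: finite real linear combinations of elements of `Q̂_ℓ`. -/
def Qfull (n : ℕ) (d r : ℕ → ℕ) (ℓ : ℕ) : Set (VP n) :=
  {V | IsPolyPair V ∧ ∃ (p : ℕ) (c : Fin p → ℝ) (W : Fin p → VP n),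
    (∀ i, W i ∈ Qhat n d r ℓ) ∧ vEquiv V (∑ i, vSMul (c i) (W i))}

/-- `m_ℓ = Σ_{k=1}^ℓ (r_k - 1) ∏_{i=k+1}^ℓ d_i`. -/
def mval (d r : ℕ → ℕ) (ℓ : ℕ) : ℕ :=
  ∑ k ∈ Finset.Icc 1 ℓ, (r k - 1) * ∏ i ∈ Finset.Icc (k+1) ℓ, d i

/-- The recursively defined classes `N̂_ℓ` of functions computed by a single output
neuron of an indegree-`d`-constrained rank-`r` maxout network with `ℓ` hidden layers. -/
def Nhat (n : ℕ) (d r : ℕ → ℕ) : ℕ → Set ((Vec n) → ℝ)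
  | 0 => {f | ∃ v : Vec n, f = fun x => ∑ i, v i * x i}
  | (k+1) => {f | ∃ (α : Fin (r (k+1)) → Fin (d (k+1)) → ℝ)
      (g : Fin (d (k+1)) → (Vec n) → ℝ),
      (∀ j, g j ∈ Nhat n d r k) ∧
      f = fun x => ⨆ i, ∑ j, α i j * g j x}

/-- `N_n(ℓ,d,r)`: finite real linear combinations of functions in `N̂_ℓ`. -/
def Nfull (n : ℕ) (d r : ℕ → ℕ) (ℓ : ℕ) : Set ((Vec n) → ℝ) :=
  {f | ∃ (p : ℕ) (c : Fin p → ℝ) (g : Fin p → (Vec n) → ℝ),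
    (∀ i, g i ∈ Nhat n d r ℓ) ∧ f = fun x => ∑ i, c i * g i x}

/-- Unconstrained single-neuron classes `N̂_ℓ` (no indegree constraint). -/
def NhatU (n : ℕ) (r : ℕ → ℕ) : ℕ → Set ((Vec n) → ℝ)
  | 0 => {f | ∃ v : Vec n, f = fun x => ∑ i, v i * x i}
  | (k+1) => {f | ∃ (m : ℕ) (α : Fin (r (k+1)) → Fin m → ℝ)
      (g : Fin m → (Vec n) → ℝ),
      (∀ j, g j ∈ NhatU n r k) ∧
      f = fun x => ⨆ i, ∑ j, α i j * g j x}

/-- `N_n(ℓ,r)`: finite real linear combinations of functions in the unconstrained `N̂_ℓ`. -/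
def NfullU (n : ℕ) (r : ℕ → ℕ) (ℓ : ℕ) : Set ((Vec n) → ℝ) :=
  {f | ∃ (p : ℕ) (c : Fin p → ℝ) (g : Fin p → (Vec n) → ℝ),
    (∀ i, g i ∈ NhatU n r ℓ) ∧ f = fun x => ∑ i, c i * g i x}

/-- `MAX_n(m)`: finite real linear combinations of maxima of at most `m` linear functions. -/
def MAXn (n m : ℕ) : Set ((Vec n) → ℝ) :=
  {f | ∃ (p : ℕ) (β : Fin p → ℝ) (a : Fin p → Fin m → Vec n),
    f = fun x => ∑ i, β i * ⨆ j, ∑ t, a i j t * x t}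
section Aux
open Pointwise

variable {n : ℕ}

/-! ### Polytope basics -/

lemma isPolytope_singleton (v : Vec n) : IsPolytope ({v} : Set (Vec n)) :=
  ⟨{v}, Finset.singleton_nonempty v, by simp⟩

lemma IsPolytope.nonempty {P : Set (Vec n)} (h : IsPolytope P) : P.Nonempty := by
  obtain ⟨s, hs, rfl⟩ := h
  exact (hs.to_set).mono (subset_convexHull ℝ _)

lemma IsPolytope.convex {P : Set (Vec n)} (h : IsPolytope P) : Convex ℝ P := by
  obtain ⟨s, hs, rfl⟩ := h
  exact convex_convexHull ℝ _

lemma IsPolytope.isCompact {P : Set (Vec n)} (h : IsPolytope P) : IsCompact P := by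
  obtain ⟨s, hs, rfl⟩ := h
  exact s.finite_toSet.isCompact_convexHull ℝ

lemma IsPolytope.add {P Q : Set (Vec n)} (hP : IsPolytope P) (hQ : IsPolytope Q) :
    IsPolytope (P + Q) := by
  classical
  obtain ⟨s, hs, rfl⟩ := hP; obtain ⟨t, ht, rfl⟩ := hQ
  exact ⟨s + t, hs.add ht, by rw [Finset.coe_add, convexHull_add]⟩

lemma IsPolytope.smul (c : ℝ) {P : Set (Vec n)} (hP : IsPolytope P) : IsPolytope (c • P) := by
  classical
  obtain ⟨s, hs, rfl⟩ := hP
  exact ⟨c • s, hs.smul_finset, by rw [Finset.coe_smul_finset, convexHull_smul]⟩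

lemma isPolytope_zero : IsPolytope (0 : Set (Vec n)) := isPolytope_singleton 0

lemma isPolytope_sum {ι : Type} (s : Finset ι) (f : ι → Set (Vec n))
    (h : ∀ i ∈ s, IsPolytope (f i)) : IsPolytope (∑ i ∈ s, f i) := by
  classical
  induction s using Finset.induction_on with
  | empty => simpa using isPolytope_zero
  | @insert a s hx ih =>
    rw [Finset.sum_insert hx]
    exact (h _ (Finset.mem_insert_self _ _)).add
      (ih fun i hi => h i (Finset.mem_insert_of_mem hi))

lemma convexHull_iUnion_convexHull {ι : Sort*} (g : ι → Set (Vec n)) :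
    convexHull ℝ (⋃ i, convexHull ℝ (g i)) = convexHull ℝ (⋃ i, g i) := by
  apply le_antisymm
  · refine convexHull_min ?_ (convex_convexHull ℝ _)
    exact Set.iUnion_subset fun i => convexHull_min
      ((Set.subset_iUnion g i).trans (subset_convexHull ℝ _)) (convex_convexHull ℝ _)
  · exact convexHull_mono (Set.iUnion_mono fun i => subset_convexHull ℝ _)

lemma isPolytope_convexHull_iUnion {N : ℕ} (hN : N ≠ 0) (f : Fin N → Set (Vec n))
    (h : ∀ i, IsPolytope (f i)) : IsPolytope (convexHull ℝ (⋃ i, f i)) := by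
  classical
  cases N with
  | zero => omega
  | succ m =>
    choose s hs hfs using h
    refine ⟨Finset.univ.biUnion s, ?_, ?_⟩
    · obtain ⟨x, hx⟩ := hs 0
      exact ⟨x, Finset.mem_biUnion.2 ⟨0, Finset.mem_univ _, hx⟩⟩
    · have hcoe : (↑(Finset.univ.biUnion s) : Set (Vec n)) = ⋃ i, (s i : Set (Vec n)) := by
        simp [Finset.coe_biUnion]
      rw [hcoe]
      calc convexHull ℝ (⋃ i, f i)
          = convexHull ℝ (⋃ i, convexHull ℝ ((s i : Set (Vec n)))) := by
            congr 1; exact Set.iUnion_congr fun i => hfs i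
        _ = convexHull ℝ (⋃ i, (s i : Set (Vec n))) := convexHull_iUnion_convexHull _

/-! ### Support functions -/

lemma continuous_lf (x : Vec n) : Continuous (fun a : Vec n => ∑ i, a i * x i) :=
  continuous_finset_sum _ fun i _ => (continuous_apply i).mul continuous_const

lemma lf_add (x a b : Vec n) :
    (∑ i, (a + b) i * x i) = (∑ i, a i * x i) + (∑ i, b i * x i) := by
  simp [add_mul, Finset.sum_add_distrib]

lemma bddAbove_lf {P : Set (Vec n)} (hP : IsPolytope P) (x : Vec n) :
    BddAbove ((fun a : Vec n => ∑ i, a i * x i) '' P) :=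
  (hP.isCompact.image (continuous_lf x)).bddAbove

lemma image_lf_add (x : Vec n) (P Q : Set (Vec n)) :
    (fun a : Vec n => ∑ i, a i * x i) '' (P + Q) =
      (fun a : Vec n => ∑ i, a i * x i) '' P + (fun a : Vec n => ∑ i, a i * x i) '' Q := by
  ext z
  constructor
  · rintro ⟨w, ⟨a, ha, b, hb, rfl⟩, rfl⟩
    exact ⟨_, ⟨a, ha, rfl⟩, _, ⟨b, hb, rfl⟩, (lf_add x a b).symm⟩
  · rintro ⟨_, ⟨a, ha, rfl⟩, _, ⟨b, hb, rfl⟩, rfl⟩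
    exact ⟨a + b, ⟨a, ha, b, hb, rfl⟩, lf_add x a b⟩

lemma suppFn_add {P Q : Set (Vec n)} (hP : IsPolytope P) (hQ : IsPolytope Q) (x : Vec n) :
    suppFn (P + Q) x = suppFn P x + suppFn Q x := by
  unfold suppFn
  rw [image_lf_add]
  exact csSup_add (hP.nonempty.image _) (bddAbove_lf hP x)
    (hQ.nonempty.image _) (bddAbove_lf hQ x)

lemma subset_of_suppFn_le {A B : Set (Vec n)} (hA : IsPolytope A) (hB : IsPolytope B)
    (h : ∀ x, suppFn A x ≤ suppFn B x) : A ⊆ B := by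
  intro a ha
  by_contra hab
  obtain ⟨f, u, hfB, hfa⟩ :=
    geometric_hahn_banach_closed_point hB.convex hB.isCompact.isClosed hab
  set v : Vec n := fun i => f ((Pi.single i (1:ℝ) : Vec n)) with hv
  have hfv : ∀ y : Vec n, f y = ∑ i, y i * v i := by
    intro y
    have hy : y = ∑ i, y i • (Pi.single i (1:ℝ) : Vec n) := by
      funext t
      simp [Finset.sum_apply, Pi.single_apply, eq_comm]
    conv_lhs => rw [hy]
    rw [map_sum]
    simp [hv, smul_eq_mul]
  have h1 : f a ≤ suppFn A v := by
    rw [hfv a]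
    exact le_csSup (bddAbove_lf hA v) ⟨a, ha, rfl⟩
  have h2 : suppFn B v ≤ u := by
    apply csSup_le (hB.nonempty.image _)
    rintro z ⟨b, hb, rfl⟩
    show (∑ i, b i * v i) ≤ u
    rw [← hfv b]
    exact (hfB b hb).le
  have := (h1.trans (h v)).trans h2
  linarith

lemma polytope_ext {A B : Set (Vec n)} (hA : IsPolytope A) (hB : IsPolytope B)
    (h : ∀ x, suppFn A x = suppFn B x) : A = B :=
  (subset_of_suppFn_le hA hB fun x => (h x).le).antisymm
    (subset_of_suppFn_le hB hA fun x => (h x).ge)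

lemma polytope_cancel {A B K : Set (Vec n)} (hA : IsPolytope A) (hB : IsPolytope B)
    (hK : IsPolytope K) (h : A + K = B + K) : A = B := by
  apply polytope_ext hA hB
  intro x
  have h' := congrArg (fun S => suppFn S x) h
  rw [suppFn_add hA hK, suppFn_add hB hK] at h'
  linarith

/-! ### vEquiv lemmas -/

lemma vEquiv_symm {A B : VP n} (h : vEquiv A B) : vEquiv B A := h.symm

lemma vEquiv_trans {A B C : VP n} (hA : IsPolyPair A) (hB : IsPolyPair B) (hC : IsPolyPair C)
    (h1 : vEquiv A B) (h2 : vEquiv B C) : vEquiv A C := by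
  have key : (A.1 + C.2) + (B.1 + B.2) = (C.1 + A.2) + (B.1 + B.2) := by
    calc (A.1 + C.2) + (B.1 + B.2) = (A.1 + B.2) + (B.1 + C.2) := by abel
    _ = (B.1 + A.2) + (C.1 + B.2) := by rw [h1, h2]
    _ = (C.1 + A.2) + (B.1 + B.2) := by abel
  exact polytope_cancel (hA.1.add hC.2) (hC.1.add hA.2) (hB.1.add hB.2) key

lemma vEquiv_add {A B C D : VP n} (h1 : vEquiv A B) (h2 : vEquiv C D) :
    vEquiv (A + C) (B + D) := by
  show (A + C).1 + (B + D).2 = (B + D).1 + (A + C).2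
  have : (A.1 + B.2) + (C.1 + D.2) = (B.1 + A.2) + (D.1 + C.2) := by rw [h1, h2]
  calc (A + C).1 + (B + D).2 = (A.1 + B.2) + (C.1 + D.2) := by
        simp only [Prod.fst_add, Prod.snd_add]; abel
  _ = (B.1 + A.2) + (D.1 + C.2) := this
  _ = (B + D).1 + (A + C).2 := by
        simp only [Prod.fst_add, Prod.snd_add]; abel

lemma vEquiv_refl (A : VP n) : vEquiv A A := rfl

lemma vEquiv_smul (c : ℝ) {A B : VP n} (h : vEquiv A B) :
    vEquiv (vSMul c A) (vSMul c B) := by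
  show c • A.1 + c • B.2 = c • B.1 + c • A.2
  rw [← smul_add, ← smul_add, h]

lemma vEquiv_sum {ι : Type} (s : Finset ι) (f g : ι → VP n)
    (h : ∀ i ∈ s, vEquiv (f i) (g i)) :
    vEquiv (∑ i ∈ s, f i) (∑ i ∈ s, g i) := by
  classical
  induction s using Finset.induction_on with
  | empty => simpa using vEquiv_refl (0 : VP n)
  | @insert a s hx ih =>
    rw [Finset.sum_insert hx, Finset.sum_insert hx]
    exact vEquiv_add (h _ (Finset.mem_insert_self _ _))
      (ih fun i hi => h i (Finset.mem_insert_of_mem hi))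

/-! ### IsPolyPair lemmas -/

lemma isPolyPair_vSMul (c : ℝ) {A : VP n} (h : IsPolyPair A) : IsPolyPair (vSMul c A) :=
  ⟨h.1.smul c, h.2.smul c⟩

lemma isPolyPair_sum {ι : Type} (s : Finset ι) (f : ι → VP n)
    (h : ∀ i ∈ s, IsPolyPair (f i)) : IsPolyPair (∑ i ∈ s, f i) := by
  constructor
  · rw [Prod.fst_sum]; exact isPolytope_sum _ _ fun i hi => (h i hi).1
  · rw [Prod.snd_sum]; exact isPolytope_sum _ _ fun i hi => (h i hi).2

lemma isPolyPair_vConv {N : ℕ} (hN : N ≠ 0) (T : Fin N → VP n)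
    (h : ∀ i, IsPolyPair (T i)) : IsPolyPair (vConv T) := by
  constructor
  · exact isPolytope_convexHull_iUnion hN _ fun i =>
      (h i).1.add (isPolytope_sum _ _ fun k _ => (h k).2)
  · show IsPolytope (∑ k, (T k).2)
    exact isPolytope_sum _ _ fun k _ => (h k).2

/-! ### vConv respects vEquiv -/

lemma vEquiv_vConv {N : ℕ} (T T' : Fin N → VP n)
    (hT : ∀ i, IsPolyPair (T i)) (hT' : ∀ i, IsPolyPair (T' i))
    (h : ∀ i, vEquiv (T i) (T' i)) : vEquiv (vConv T) (vConv T') := by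
  classical
  show convexHull ℝ (⋃ i, ((T i).1 + ∑ k ∈ Finset.univ.erase i, (T k).2)) + ∑ k, (T' k).2 =
    convexHull ℝ (⋃ i, ((T' i).1 + ∑ k ∈ Finset.univ.erase i, (T' k).2)) + ∑ k, (T k).2
  have hZ' : Convex ℝ (∑ k, (T' k).2) := (isPolytope_sum _ _ fun k _ => (hT' k).2).convex
  have hZ : Convex ℝ (∑ k, (T k).2) := (isPolytope_sum _ _ fun k _ => (hT k).2).convex
  rw [← hZ'.convexHull_eq, ← convexHull_add, ← hZ.convexHull_eq, ← convexHull_add,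
    Set.iUnion_add, Set.iUnion_add]
  congr 1
  apply Set.iUnion_congr
  intro i
  rw [← Finset.add_sum_erase Finset.univ (fun k => (T' k).2) (Finset.mem_univ i),
    ← Finset.add_sum_erase Finset.univ (fun k => (T k).2) (Finset.mem_univ i)]
  have hi := h i
  calc (T i).1 + (∑ k ∈ Finset.univ.erase i, (T k).2) +
        ((T' i).2 + ∑ k ∈ Finset.univ.erase i, (T' k).2)
      = ((T i).1 + (T' i).2) +
        ((∑ k ∈ Finset.univ.erase i, (T k).2) + ∑ k ∈ Finset.univ.erase i, (T' k).2) := by abel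
  _ = ((T' i).1 + (T i).2) +
        ((∑ k ∈ Finset.univ.erase i, (T k).2) + ∑ k ∈ Finset.univ.erase i, (T' k).2) := by
        rw [hi]
  _ = (T' i).1 + (∑ k ∈ Finset.univ.erase i, (T' k).2) +
        ((T i).2 + ∑ k ∈ Finset.univ.erase i, (T k).2) := by abel

end Aux
/-! ### Dimension lemmas -/

lemma polyDim_eq (X : Set (Vec n)) :
    polyDim X = Module.finrank ℝ (vectorSpan ℝ X) := by
  unfold polyDim
  rw [direction_affineSpan]

lemma sub_mem_vectorSpan' {s : Set (Vec n)} {x y : Vec n} (hx : x ∈ s) (hy : y ∈ s) :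
    x - y ∈ vectorSpan ℝ s := by
  rw [vectorSpan_def]
  have := Submodule.subset_span (R := ℝ) (Set.vsub_mem_vsub hx hy)
  simpa [vsub_eq_sub] using this

lemma vectorSpan_le_of {s : Set (Vec n)} {U : Submodule ℝ (Vec n)}
    (h : ∀ x ∈ s, ∀ y ∈ s, x - y ∈ U) : vectorSpan ℝ s ≤ U := by
  rw [vectorSpan_def, Submodule.span_le]
  rintro z ⟨x, hx, y, hy, rfl⟩
  simpa [vsub_eq_sub] using h x hx y hy

lemma vectorSpan_add_le' (A B : Set (Vec n)) :
    vectorSpan ℝ (A + B) ≤ vectorSpan ℝ A ⊔ vectorSpan ℝ B := by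
  apply vectorSpan_le_of
  rintro x ⟨a, ha, b, hb, rfl⟩ y ⟨a', ha', b', hb', rfl⟩
  have hh : (a + b) - (a' + b') = (a - a') + (b - b') := by abel
  rw [hh]
  exact Submodule.add_mem _ (Submodule.mem_sup_left (sub_mem_vectorSpan' ha ha'))
    (Submodule.mem_sup_right (sub_mem_vectorSpan' hb hb'))

lemma vectorSpan_smul_le' (c : ℝ) (A : Set (Vec n)) :
    vectorSpan ℝ (c • A) ≤ vectorSpan ℝ A := by
  apply vectorSpan_le_of
  rintro x ⟨a, ha, rfl⟩ y ⟨a', ha', rfl⟩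
  have hh : c • a - c • a' = c • (a - a') := (smul_sub c a a').symm
  rw [hh]
  exact Submodule.smul_mem _ _ (sub_mem_vectorSpan' ha ha')

lemma vectorSpan_le_add_left (A B : Set (Vec n)) (hB : B.Nonempty) :
    vectorSpan ℝ A ≤ vectorSpan ℝ (A + B) := by
  obtain ⟨b, hb⟩ := hB
  apply vectorSpan_le_of
  intro x hx y hy
  have hh : x - y = (x + b) - (y + b) := by abel
  rw [hh]
  exact sub_mem_vectorSpan' (Set.add_mem_add hx hb) (Set.add_mem_add hy hb)

lemma vectorSpan_le_add_right (A B : Set (Vec n)) (hA : A.Nonempty) :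
    vectorSpan ℝ B ≤ vectorSpan ℝ (A + B) := by
  rw [add_comm]
  exact vectorSpan_le_add_left B A hA

lemma vectorSpan_convexHull' (s : Set (Vec n)) :
    vectorSpan ℝ (convexHull ℝ s) = vectorSpan ℝ s := by
  rw [← direction_affineSpan, affineSpan_convexHull, direction_affineSpan]

lemma vectorSpan_sum_le {ι : Type} (s : Finset ι) (f : ι → Set (Vec n))
    (U : Submodule ℝ (Vec n)) (h : ∀ i ∈ s, vectorSpan ℝ (f i) ≤ U) :
    vectorSpan ℝ (∑ i ∈ s, f i) ≤ U := by
  classical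
  induction s using Finset.induction_on with
  | empty =>
    have : (0 : Set (Vec n)) = {0} := rfl
    simp only [Finset.sum_empty, this, vectorSpan_singleton]
    exact bot_le
  | @insert a s hx ih =>
    rw [Finset.sum_insert hx]
    exact (vectorSpan_add_le' _ _).trans (sup_le (h _ (Finset.mem_insert_self _ _))
      (ih fun i hi => h i (Finset.mem_insert_of_mem hi)))

lemma finrank_sup_le' (U W : Submodule ℝ (Vec n)) :
    Module.finrank ℝ (U ⊔ W : Submodule ℝ (Vec n)) ≤
      Module.finrank ℝ U + Module.finrank ℝ W := by
  have := Submodule.finrank_sup_add_finrank_inf_eq U W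
  omega

lemma finrank_iSup_fin_le (D : ℕ) (f : Fin D → Submodule ℝ (Vec n)) :
    Module.finrank ℝ (⨆ j, f j : Submodule ℝ (Vec n)) ≤ ∑ j, Module.finrank ℝ (f j) := by
  induction D with
  | zero => simp [iSup_of_empty]
  | succ m ih =>
    have hsplit : (⨆ j, f j) = f 0 ⊔ ⨆ j : Fin m, f j.succ := by
      apply le_antisymm
      · exact iSup_le fun i => Fin.cases le_sup_left
          (fun j => le_trans (le_iSup (fun j : Fin m => f j.succ) j) le_sup_right) i
      · exact sup_le (le_iSup f 0) (iSup_le fun j => le_iSup f j.succ)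
    rw [hsplit, Fin.sum_univ_succ]
    exact (finrank_sup_le' _ _).trans (Nat.add_le_add_left (ih _) _)

lemma exists_span_iUnion {N : ℕ} (hN : N ≠ 0) (T : Fin N → Set (Vec n))
    (hT : ∀ i, (T i).Nonempty) (U : Submodule ℝ (Vec n))
    (hU : ∀ i, vectorSpan ℝ (T i) ≤ U) :
    ∃ W : Submodule ℝ (Vec n), vectorSpan ℝ (⋃ i, T i) ≤ U ⊔ W ∧
      Module.finrank ℝ W ≤ N - 1 := by
  classical
  cases N with
  | zero => omega
  | succ m =>
    choose t ht using hT
    set g : Fin m → Vec n := fun j => t j.succ - t 0 with hg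
    refine ⟨Submodule.span ℝ (Set.range g), ?_, ?_⟩
    · have hmem : ∀ i : Fin (m+1), t i - t 0 ∈ Submodule.span ℝ (Set.range g) := by
        intro i
        refine Fin.cases ?_ ?_ i
        · simpa using Submodule.zero_mem _
        · intro j
          exact Submodule.subset_span ⟨j, rfl⟩
      apply vectorSpan_le_of
      intro x hx y hy
      obtain ⟨i, hxi⟩ := Set.mem_iUnion.1 hx
      obtain ⟨j, hyj⟩ := Set.mem_iUnion.1 hy
      have hh : x - y = ((x - t i) - (y - t j)) + ((t i - t 0) - (t j - t 0)) := by abel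
      rw [hh]
      refine Submodule.add_mem _ (Submodule.mem_sup_left ?_) (Submodule.mem_sup_right ?_)
      · exact Submodule.sub_mem _ (hU i (sub_mem_vectorSpan' hxi (ht i)))
          (hU j (sub_mem_vectorSpan' hyj (ht j)))
      · exact Submodule.sub_mem _ (hmem i) (hmem j)
    · have hrange : Set.range g = (↑(Finset.univ.image g) : Set (Vec n)) := by
        simp
      rw [hrange]
      refine le_trans (finrank_span_finset_le_card _) ?_
      simpa using (Finset.card_image_le (s := Finset.univ) (f := g)).trans (by simp)

/-! ### mval recurrence -/

lemma mval_zero (d r : ℕ → ℕ) : mval d r 0 = 0 := by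
  simp [mval]

lemma mval_succ (d r : ℕ → ℕ) (k : ℕ) :
    mval d r (k+1) = d (k+1) * mval d r k + (r (k+1) - 1) := by
  unfold mval
  rw [Finset.sum_Icc_succ_top (by omega)]
  have htop : (r (k+1) - 1) * ∏ i ∈ Finset.Icc (k+1+1) (k+1), d i = r (k+1) - 1 := by
    rw [Finset.Icc_eq_empty (by omega), Finset.prod_empty, mul_one]
  rw [htop]
  congr 1
  rw [Finset.mul_sum]
  apply Finset.sum_congr rfl
  intro t htmem
  have ht' : t ≤ k := (Finset.mem_Icc.1 htmem).2
  rw [Finset.prod_Icc_succ_top (by omega)]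
  ring
/-! ### Main induction -/

def GoodRep (m : ℕ) (V : VP n) : Prop :=
  ∃ A B : Set (Vec n), IsPolytope A ∧ IsPolytope B ∧ vEquiv (A, B) V ∧ polyDim (A + B) ≤ m

lemma vDim_le_of_goodRep {m : ℕ} {V : VP n} (h : GoodRep m V) : vDim V ≤ m := by
  obtain ⟨A, B, hA, hB, he, hd⟩ := h
  exact le_trans (Nat.sInf_le ⟨A, B, hA, hB, he, rfl⟩) hd

lemma isPolyPair_of_mem_Qhat {d r : ℕ → ℕ} {ℓ : ℕ} {V : VP n}
    (h : V ∈ Qhat n d r ℓ) : IsPolyPair V := by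
  cases ℓ with
  | zero => exact h.1
  | succ k => exact h.1

lemma goodRep_Qhat (d r : ℕ → ℕ) (hr : ∀ k, 1 ≤ r k) :
    ∀ ℓ : ℕ, ∀ V ∈ Qhat n d r ℓ, GoodRep (mval d r ℓ) V := by
  intro ℓ
  induction ℓ with
  | zero =>
    rintro V ⟨hVp, v, hv⟩
    refine ⟨{v}, {0}, isPolytope_singleton v, isPolytope_singleton 0, hv.symm, ?_⟩
    rw [mval_zero, Set.singleton_add_singleton, polyDim_eq, vectorSpan_singleton]
    simp
  | succ k ih =>
    rintro V ⟨hVp, α, W, hW, hVeq⟩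
    have hWp : ∀ j, IsPolyPair (W j) := fun j => isPolyPair_of_mem_Qhat (hW j)
    choose A B hA hB hAB hdim using fun j => ih (W j) (hW j)
    have hN : r (k+1) ≠ 0 := by have := hr (k+1); omega
    set S : Fin (r (k+1)) → VP n := fun i => ∑ j, vSMul (α i j) (W j) with hS
    set S' : Fin (r (k+1)) → VP n := fun i => ∑ j, vSMul (α i j) (A j, B j) with hS'
    have hSp : ∀ i, IsPolyPair (S i) := fun i =>
      isPolyPair_sum _ _ fun j _ => isPolyPair_vSMul _ (hWp j)
    have hS'p : ∀ i, IsPolyPair (S' i) := fun i =>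
      isPolyPair_sum _ _ fun j _ => isPolyPair_vSMul _ ⟨hA j, hB j⟩
    have hSS' : ∀ i, vEquiv (S' i) (S i) := fun i =>
      vEquiv_sum _ _ _ fun j _ => vEquiv_smul _ (hAB j)
    have hconv : vEquiv (vConv S') (vConv S) := vEquiv_vConv S' S hS'p hSp hSS'
    have hCp : IsPolyPair (vConv S) := isPolyPair_vConv hN S hSp
    have hC'p : IsPolyPair (vConv S') := isPolyPair_vConv hN S' hS'p
    have hfinal : vEquiv (vConv S') V :=
      vEquiv_trans hC'p hCp hVp hconv (vEquiv_symm hVeq)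
    refine ⟨(vConv S').1, (vConv S').2, hC'p.1, hC'p.2, hfinal, ?_⟩
    -- dimension bound
    set U : Submodule ℝ (Vec n) := ⨆ j, vectorSpan ℝ (A j + B j) with hU
    have hUA : ∀ (j) (c : ℝ), vectorSpan ℝ (c • A j) ≤ U := fun j c =>
      (vectorSpan_smul_le' c _).trans
        ((vectorSpan_le_add_left _ _ (hB j).nonempty).trans
          (le_iSup (fun j => vectorSpan ℝ (A j + B j)) j))
    have hUB : ∀ (j) (c : ℝ), vectorSpan ℝ (c • B j) ≤ U := fun j c =>
      (vectorSpan_smul_le' c _).trans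
        ((vectorSpan_le_add_right _ _ (hA j).nonempty).trans
          (le_iSup (fun j => vectorSpan ℝ (A j + B j)) j))
    have h1 : ∀ i, vectorSpan ℝ (S' i).1 ≤ U := by
      intro i
      have hfst : (S' i).1 = ∑ j, (α i j) • A j := by
        rw [hS', Prod.fst_sum]
        rfl
      rw [hfst]
      exact vectorSpan_sum_le _ _ _ fun j _ => hUA j _
    have h2 : ∀ i, vectorSpan ℝ (S' i).2 ≤ U := by
      intro i
      have hsnd : (S' i).2 = ∑ j, (α i j) • B j := by
        rw [hS', Prod.snd_sum]
        rfl
      rw [hsnd]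
      exact vectorSpan_sum_le _ _ _ fun j _ => hUB j _
    set Y : Fin (r (k+1)) → Set (Vec n) :=
      fun i => (S' i).1 + ∑ m ∈ Finset.univ.erase i, (S' m).2 with hY
    have hYU : ∀ i, vectorSpan ℝ (Y i) ≤ U := fun i =>
      (vectorSpan_add_le' _ _).trans
        (sup_le (h1 i) (vectorSpan_sum_le _ _ _ fun m _ => h2 m))
    have hYne : ∀ i, (Y i).Nonempty := fun i =>
      ((hS'p i).1.add (isPolytope_sum _ _ fun m _ => (hS'p m).2)).nonempty
    obtain ⟨Wm, hW1, hW2⟩ := exists_span_iUnion hN Y hYne U hYU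
    have hR2 : vectorSpan ℝ (∑ m, (S' m).2) ≤ U :=
      vectorSpan_sum_le _ _ _ fun m _ => h2 m
    have htot : vectorSpan ℝ ((vConv S').1 + (vConv S').2) ≤ U ⊔ Wm := by
      refine (vectorSpan_add_le' _ _).trans (sup_le ?_ ?_)
      · have : (vConv S').1 = convexHull ℝ (⋃ i, Y i) := rfl
        rw [this, vectorSpan_convexHull']
        exact hW1
      · exact le_trans hR2 le_sup_left
    rw [polyDim_eq, mval_succ]
    calc Module.finrank ℝ (vectorSpan ℝ ((vConv S').1 + (vConv S').2))
        ≤ Module.finrank ℝ (U ⊔ Wm : Submodule ℝ (Vec n)) := Submodule.finrank_mono htot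
      _ ≤ Module.finrank ℝ U + Module.finrank ℝ Wm := finrank_sup_le' _ _
      _ ≤ d (k+1) * mval d r k + (r (k+1) - 1) := by
          have hu : Module.finrank ℝ U ≤ d (k+1) * mval d r k := by
            refine le_trans (finrank_iSup_fin_le _ _) ?_
            have : ∀ j : Fin (d (k+1)),
                Module.finrank ℝ (vectorSpan ℝ (A j + B j)) ≤ mval d r k := by
              intro j
              have := hdim j
              rwa [polyDim_eq] at this
            calc (∑ j : Fin (d (k+1)), Module.finrank ℝ (vectorSpan ℝ (A j + B j)))
                ≤ ∑ _j : Fin (d (k+1)), mval d r k :=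
                  Finset.sum_le_sum fun j _ => this j
              _ = d (k+1) * mval d r k := by simp [Finset.sum_const, mul_comm]
          omega
/-- every virtual polytope in `Q̂_ℓ` has dimension at most
`m_ℓ = Σ_{k=1}^ℓ (r_k - 1) ∏_{i=k+1}^ℓ d_i`. -/
theorem vDim_Qhat_le {n : ℕ} (ℓ : ℕ) (d r : ℕ → ℕ)
    (hd : ∀ k, 1 ≤ d k) (hr : ∀ k, 1 ≤ r k) :
    ∀ V ∈ Qhat n d r ℓ, vDim V ≤ mval d r ℓ := by
  intro V hV
  exact vDim_le_of_goodRep (goodRep_Qhat d r hr ℓ V hV)
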